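/- Let k be a σ-field, and let a, b ∈ k with a ≠ 0 and σ_k(a) = a · b². Let R be a k-σ-algebra and let x₁, x₂ ∈ R satisfy xᵢ² = algebraMap k R (a) and σ_R(xᵢ) = algebraMap k R (b) · xᵢ for i = 1, 2. Then there exists a unique g ∈ R such that g² = 1, σ_R(g) = g, and x₂ = g · x₁. (This expresses that X_{a,b}, given by X_{a,b}(R) = {x ∈ R | x² = a, σ(x) = b x}, is a torsor under the σ-algebraic subgroup G of 𝔾ₘ with G(R) = {g ∈ Rˣ | g² = 1, σ(g) = g}: the group acts simply transitively on the points of X_{a,b}.) -/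

import Mathlib

/-- `X_{a,b}(R) = {x ∈ R | x² = a, σ(x) = b x}` is a torsor under the σ-algebraic
subgroup `G ≤ 𝔾ₘ` with `G(R) = {g ∈ Rˣ | g² = 1, σ(g) = g}`: given two points
`x₁, x₂` there is a unique `g` with `g² = 1`, `σ(g) = g` and `x₂ = g x₁`. -/
theorem torsor_Xab_simply_transitive (k R : Type*) [Field k] [CommRing R] [Algebra k R]
    (σk : k →+* k) (σR : R →+* R)
    (hσ : ∀ c : k, σR (algebraMap k R c) = algebraMap k R (σk c))
    (a b : k) (ha : a ≠ 0) (hab : σk a = a * b ^ 2)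
    (x₁ x₂ : R)
    (h1 : x₁ ^ 2 = algebraMap k R a) (h1' : σR x₁ = algebraMap k R b * x₁)
    (h2 : x₂ ^ 2 = algebraMap k R a) (h2' : σR x₂ = algebraMap k R b * x₂) :
    ∃! g : R, g ^ 2 = 1 ∧ σR g = g ∧ x₂ = g * x₁ := by
  have hb : b ≠ 0 := by
    intro hb0
    apply ha
    have : σk a = 0 := by rw [hab, hb0]; ring
    exact σk.injective (by rw [this, map_zero])
  have hσa : σk a ≠ 0 := by rw [hab]; exact mul_ne_zero ha (pow_ne_zero 2 hb)
  have hainv : σk a⁻¹ = (a * b ^ 2)⁻¹ := by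
    rw [map_inv₀, hab]
  set A : R := algebraMap k R a with hA
  set Ai : R := algebraMap k R a⁻¹ with hAi
  have hAAi : A * Ai = 1 := by
    rw [hA, hAi, ← map_mul, mul_inv_cancel₀ ha, map_one]
  refine ⟨x₂ * x₁ * Ai, ⟨?_, ?_, ?_⟩, ?_⟩
  · have : (x₂ * x₁ * Ai) ^ 2 = (x₂ ^ 2) * (x₁ ^ 2) * Ai ^ 2 := by ring
    rw [this, h1, h2]
    calc A * A * Ai ^ 2 = (A * Ai) * (A * Ai) := by ring
    _ = 1 := by rw [hAAi]; ring
  · rw [map_mul, map_mul, h1', h2', hσ, hainv]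
    have hb2 : algebraMap k R b * algebraMap k R b = algebraMap k R (b ^ 2) := by
      rw [← map_mul]; ring_nf
    have : algebraMap k R b * x₂ * (algebraMap k R b * x₁) = x₂ * x₁ * algebraMap k R (b ^ 2) := by
      rw [← hb2]; ring
    rw [this, mul_assoc, ← map_mul, hAi]
    congr 1
    exact congrArg _ (by field_simp)
  · calc x₂ = x₂ * 1 := (mul_one _).symm
    _ = x₂ * (x₁ ^ 2 * Ai) := by rw [h1, hAAi]
    _ = x₂ * x₁ * Ai * x₁ := by ring
  · rintro g ⟨-, -, hg⟩
    calc g = g * (x₁ ^ 2 * Ai) := by rw [h1, hAAi, mul_one]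
    _ = (g * x₁) * x₁ * Ai := by ring
    _ = x₂ * x₁ * Ai := by rw [← hg]
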